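/- Let G be a one-sided POSG, let α_1, …, α_k be linear functions on Δ(S), let Γ = Conv({α_1, …, α_k}), and let b ∈ Δ(S). Then sup_{π1 ∈ Π1} sup_{ᾱ ∈ Γ^{A1×O}} valcomp(π1, ᾱ)(b) equals the optimal value (which is attained) of the following linear program: maximize Σ_{s ∈ S} b(s)·v(s) over real variables (π1(a1))_{a1 ∈ A1}, (λ̂_i^{a1,o})_{1 ≤ i ≤ k, (a1,o) ∈ A1×O}, (α̂^{a1,o}(s'))_{(a1,o,s')}, and (v(s))_{s ∈ S}, subject to: v(s) ≤ Σ_{a1} π1(a1) R(s, a1, a2) + γ Σ_{(a1,o,s')} T(o, s' | s, a1, a2) α̂^{a1,o}(s') for all (s, a2) ∈ S × A2; α̂^{a1,o}(s') = Σ_{i=1}^k λ̂_i^{a1,o} α_i(s') for all (a1, o, s'); Σ_{i=1}^k λ̂_i^{a1,o} = π1(a1) for all (a1, o); Σ_{a1} π1(a1) = 1; π1(a1) ≥ 0 for all a1; and λ̂_i^{a1,o} ≥ 0 for all i, a1, o. -/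

import Mathlib

open scoped BigOperators

noncomputable section

/-- ℓ1 distance on `S → ℝ`. -/
def l1dist {S : Type*} [Fintype S] (p q : S → ℝ) : ℝ := ∑ s, |p s - q s|

/-- Evaluation at a belief `b` of the linear function on the simplex with vertex values
`α : S → ℝ`. -/
def lineval {S : Type*} [Fintype S] (α : S → ℝ) (b : S → ℝ) : ℝ := ∑ s, b s * α s

/-- `f` is `k`-Lipschitz with respect to the ℓ1 metric on the probability simplex. -/
def LipOnSimplex {S : Type*} [Fintype S] (k : ℝ) (f : (S → ℝ) → ℝ) : Prop :=
  ∀ p ∈ stdSimplex ℝ S, ∀ q ∈ stdSimplex ℝ S, |f p - f q| ≤ k * l1dist p q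

/-- A one-sided partially observable stochastic game. -/
structure OSPOSG (S A1 A2 O : Type*) [Fintype S] [Fintype A1] [Fintype A2] [Fintype O] where
  /-- transition function: `T s a1 a2 o s'` is the probability of observing `o` and moving
  to `s'` from `s` under actions `a1, a2`. -/
  T : S → A1 → A2 → O → S → ℝ
  T_nonneg : ∀ s a1 a2 o s', 0 ≤ T s a1 a2 o s'
  T_sum : ∀ s a1 a2, ∑ o, ∑ s', T s a1 a2 o s' = 1
  /-- reward function of player 1 -/
  R : S → A1 → A2 → ℝ
  /-- discount factor -/
  γ : ℝ
  γ_pos : 0 < γ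
  γ_lt_one : γ < 1

namespace OSPOSG

variable {S A1 A2 O : Type*} [Fintype S] [Fintype A1] [Fintype A2] [Fintype O]
  [Nonempty S] [Nonempty A1] [Nonempty A2] [Nonempty O]

/-- The minimum reward `r_min`. -/
def rmin (G : OSPOSG S A1 A2 O) : ℝ :=
  Finset.univ.inf' Finset.univ_nonempty fun x : S × A1 × A2 => G.R x.1 x.2.1 x.2.2

/-- The maximum reward `r_max`. -/
def rmax (G : OSPOSG S A1 A2 O) : ℝ :=
  Finset.univ.sup' Finset.univ_nonempty fun x : S × A1 × A2 => G.R x.1 x.2.1 x.2.2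

/-- `L = r_min / (1 - γ)`. -/
def Lval (G : OSPOSG S A1 A2 O) : ℝ := G.rmin / (1 - G.γ)

/-- `U = r_max / (1 - γ)`. -/
def Uval (G : OSPOSG S A1 A2 O) : ℝ := G.rmax / (1 - G.γ)

/-- `δ = (U - L) / 2`. -/
def δval (G : OSPOSG S A1 A2 O) : ℝ := (G.Uval - G.Lval) / 2

/-- The set of stage strategies of player 2. -/
def Pi2 (S A2 : Type*) [Fintype A2] : Set (S → A2 → ℝ) :=
  {π2 | ∀ s, π2 s ∈ stdSimplex ℝ A2}

/-- Vertex values of the value composition `valcomp(π1, ᾱ)`. -/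
def valcompVert (G : OSPOSG S A1 A2 O) (π1 : A1 → ℝ) (αb : A1 → O → S → ℝ) (s : S) : ℝ :=
  Finset.univ.inf' Finset.univ_nonempty fun a2 =>
    ∑ a1, π1 a1 * (G.R s a1 a2 + G.γ * ∑ o, ∑ s', G.T s a1 a2 o s' * αb a1 o s')

/-- The value composition `valcomp(π1, ᾱ)`, a linear function of the belief `b`. -/
def valcomp (G : OSPOSG S A1 A2 O) (π1 : A1 → ℝ) (αb : A1 → O → S → ℝ) (b : S → ℝ) : ℝ :=
  ∑ s, b s * G.valcompVert π1 αb s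

/-- `Pr_{b,π1,π2}[a1, o]`: the probability that player 1 plays `a1` and observes `o`. -/
def Pr (G : OSPOSG S A1 A2 O) (b : S → ℝ) (π1 : A1 → ℝ) (π2 : S → A2 → ℝ)
    (a1 : A1) (o : O) : ℝ :=
  ∑ s, ∑ a2, ∑ s', b s * π1 a1 * π2 s a2 * G.T s a1 a2 o s'

/-- The updated belief `τ(b, a1, π2, o)` of player 1 (junk value `0` if the normalizing
constant vanishes; such terms are always multiplied by a zero probability below). -/
def beliefUpd (G : OSPOSG S A1 A2 O) (b : S → ℝ) (a1 : A1) (π2 : S → A2 → ℝ) (o : O) :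
    S → ℝ := fun s' =>
  (∑ s, ∑ a2, b s * π2 s a2 * G.T s a1 a2 o s') /
    (∑ s'', ∑ s, ∑ a2, b s * π2 s a2 * G.T s a1 a2 o s'')

/-- The stage utility `u^{V,b}(π1, π2)`. -/
def stageU (G : OSPOSG S A1 A2 O) (V : (S → ℝ) → ℝ) (b : S → ℝ)
    (π1 : A1 → ℝ) (π2 : S → A2 → ℝ) : ℝ :=
  (∑ s, ∑ a1, ∑ a2, b s * π1 a1 * π2 s a2 * G.R s a1 a2) +
    G.γ * ∑ a1, ∑ o, G.Pr b π1 π2 a1 o * V (G.beliefUpd b a1 π2 o)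

/-- The minimax (Bellman) operator `[HV](b) = sup_{π1} inf_{π2} u^{V,b}(π1,π2)`. -/
def Hop (G : OSPOSG S A1 A2 O) (V : (S → ℝ) → ℝ) (b : S → ℝ) : ℝ :=
  ⨆ π1 : stdSimplex ℝ A1, ⨅ π2 : Pi2 S A2, G.stageU V b π1.1 π2.1

end OSPOSG

namespace OSPOSG

variable {S A1 A2 O : Type*} [Fintype S] [Fintype A1] [Fintype A2] [Fintype O]
  [Nonempty S] [Nonempty A1] [Nonempty A2] [Nonempty O]

/-- Auxiliary: a member of the convex hull of the range of a finitely-indexed family can be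
written as a convex combination indexed by the same index type. -/
private lemma exists_fin_weights {k : ℕ} {α : Fin k → S → ℝ} {x : S → ℝ}
    (hx : x ∈ convexHull ℝ (Set.range α)) :
    ∃ μ : Fin k → ℝ, (∀ i, 0 ≤ μ i) ∧ (∑ i, μ i) = 1 ∧ ∀ s, x s = ∑ i, μ i * α i s := by
  classical
  rw [convexHull_range_eq_exists_affineCombination] at hx
  obtain ⟨t, w, hw0, hw1, hwx⟩ := hx
  refine ⟨fun i => if i ∈ t then w i else 0, fun i => ?_, ?_, fun s => ?_⟩
  · dsimp only
    split
    · exact hw0 _ ‹_›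
    · exact le_refl 0
  · simpa [Finset.sum_ite_mem] using hw1
  · rw [Finset.affineCombination_eq_linear_combination t α w hw1] at hwx
    rw [← hwx]
    simp [Finset.sum_apply, ite_mul, Finset.sum_ite_mem]

/-- Auxiliary algebraic identity relating the two ways of writing the stage payoff. -/
private lemma sum_comp_eq (G : OSPOSG S A1 A2 O) (π1 : A1 → ℝ) (αb ahat : A1 → O → S → ℝ)
    (h : ∀ a1 o s', π1 a1 * αb a1 o s' = ahat a1 o s') (s : S) (a2 : A2) :
    ∑ a1, π1 a1 * (G.R s a1 a2 + G.γ * ∑ o, ∑ s', G.T s a1 a2 o s' * αb a1 o s')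
      = (∑ a1, π1 a1 * G.R s a1 a2) +
        G.γ * ∑ a1, ∑ o, ∑ s', G.T s a1 a2 o s' * ahat a1 o s' := by
  have key : ∀ a1, ∑ o, ∑ s', G.T s a1 a2 o s' * ahat a1 o s'
      = π1 a1 * ∑ o, ∑ s', G.T s a1 a2 o s' * αb a1 o s' := by
    intro a1
    rw [Finset.mul_sum]
    refine Finset.sum_congr rfl fun o _ => ?_
    rw [Finset.mul_sum]
    refine Finset.sum_congr rfl fun s' _ => ?_
    rw [← h a1 o s']; ring
  rw [Finset.mul_sum, ← Finset.sum_add_distrib]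
  refine Finset.sum_congr rfl fun a1 _ => ?_
  rw [key a1]; ring

/-- The value `[HV](b)` of the max-composition over `Γ = Conv({α_1, …, α_k})` coincides with
the optimal value (which is attained) of the linear program of Lemma 13:
it is the greatest objective value `Σ_s b(s)·v(s)` over all feasible
`(π1, λ̂, α̂, v)`. -/
theorem maxComposition_eq_LP (G : OSPOSG S A1 A2 O) (k : ℕ) (hk : 0 < k)
    (α : Fin k → S → ℝ) (b : S → ℝ) (hb : b ∈ stdSimplex ℝ S) :
    IsGreatest
      {y : ℝ | ∃ (π1 : A1 → ℝ) (lam : Fin k → A1 → O → ℝ)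
          (ahat : A1 → O → S → ℝ) (v : S → ℝ),
        (∀ s a2, v s ≤ (∑ a1, π1 a1 * G.R s a1 a2) +
          G.γ * ∑ a1, ∑ o, ∑ s', G.T s a1 a2 o s' * ahat a1 o s') ∧
        (∀ a1 o s', ahat a1 o s' = ∑ i, lam i a1 o * α i s') ∧
        (∀ a1 o, (∑ i, lam i a1 o) = π1 a1) ∧
        ((∑ a1, π1 a1) = 1) ∧
        (∀ a1, 0 ≤ π1 a1) ∧
        (∀ i a1 o, 0 ≤ lam i a1 o) ∧
        y = ∑ s, b s * v s}
      (sSup {y : ℝ | ∃ π1 ∈ stdSimplex ℝ A1, ∃ αb : A1 → O → S → ℝ,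
        (∀ a1 o, αb a1 o ∈ convexHull ℝ (Set.range α)) ∧ y = G.valcomp π1 αb b}) := by
  classical
  have i0 : Fin k := ⟨0, hk⟩
  set K := convexHull ℝ (Set.range α) with hKdef
  set D : Set ((A1 → ℝ) × (A1 → O → S → ℝ)) :=
    (stdSimplex ℝ A1) ×ˢ {αb | ∀ a1 o, αb a1 o ∈ K} with hD
  set f : (A1 → ℝ) × (A1 → O → S → ℝ) → ℝ := fun p => G.valcomp p.1 p.2 b with hf
  have hAeq : {y : ℝ | ∃ π1 ∈ stdSimplex ℝ A1, ∃ αb : A1 → O → S → ℝ,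
      (∀ a1 o, αb a1 o ∈ K) ∧ y = G.valcomp π1 αb b} = f '' D := by
    ext y
    constructor
    · rintro ⟨π1, hπ1, αb, hαb, rfl⟩
      exact ⟨(π1, αb), ⟨hπ1, hαb⟩, rfl⟩
    · rintro ⟨⟨π1, αb⟩, ⟨hπ1, hαb⟩, rfl⟩
      exact ⟨π1, hπ1, αb, hαb, rfl⟩
  have hKcomp : IsCompact K := (Set.finite_range α).isCompact_convexHull (𝕜 := ℝ)
  have hDcomp : IsCompact D := by
    refine (isCompact_stdSimplex _ _).prod ?_
    have hset : {αb : A1 → O → S → ℝ | ∀ a1 o, αb a1 o ∈ K}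
        = Set.pi Set.univ (fun _ : A1 => Set.pi Set.univ fun _ : O => K) := by
      ext g; simp [Set.mem_pi]
    rw [hset]
    exact isCompact_univ_pi fun _ => isCompact_univ_pi fun _ => hKcomp
  have hfc : Continuous f := by
    simp only [hf]
    unfold valcomp valcompVert
    refine continuous_finset_sum _ fun s _ => Continuous.mul continuous_const ?_
    refine Continuous.finset_inf'_apply Finset.univ_nonempty fun a2 _ => ?_
    refine continuous_finset_sum _ fun a1 _ =>
      Continuous.mul ((continuous_apply a1).comp continuous_fst) ?_
    refine Continuous.add continuous_const (Continuous.mul continuous_const ?_)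
    refine continuous_finset_sum _ fun o _ => continuous_finset_sum _ fun s' _ => ?_
    exact Continuous.mul continuous_const
      ((continuous_apply s').comp ((continuous_apply o).comp
        ((continuous_apply a1).comp continuous_snd)))
  have hDne : D.Nonempty := by
    refine ⟨(fun a1 : A1 => if a1 = Classical.arbitrary A1 then (1:ℝ) else 0,
      fun _ _ => α i0), ⟨⟨fun x => ?_, ?_⟩, fun a1 o => subset_convexHull ℝ _ ⟨i0, rfl⟩⟩⟩
    · dsimp only
      split <;> norm_num
    · simp
  rw [hAeq]
  have hcomp := hDcomp.image hfc
  have hne := hDne.image f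
  have hbdd := hcomp.bddAbove
  have hmem : sSup (f '' D) ∈ f '' D := hcomp.sSup_mem hne
  constructor
  · -- membership in the LP feasible-value set
    obtain ⟨⟨π1, αb⟩, hpD, hval⟩ := hmem
    obtain ⟨hπ1, hαb⟩ := hpD
    dsimp only at hπ1 hαb hval
    choose μ hμ0 hμ1 hμx using fun a1 o => exists_fin_weights (hαb a1 o)
    refine ⟨π1, fun i a1 o => π1 a1 * μ a1 o i, fun a1 o s' => π1 a1 * αb a1 o s',
      fun s => G.valcompVert π1 αb s, ?_, ?_, ?_, hπ1.2, hπ1.1, ?_, ?_⟩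
    · intro s a2
      dsimp only
      rw [← G.sum_comp_eq π1 αb _ (fun a1 o s' => rfl) s a2]
      exact Finset.inf'_le _ (Finset.mem_univ a2)
    · intro a1 o s'
      dsimp only
      rw [hμx a1 o s', Finset.mul_sum]
      exact Finset.sum_congr rfl fun i _ => by ring
    · intro a1 o
      dsimp only
      rw [← Finset.mul_sum, hμ1 a1 o, mul_one]
    · exact fun i a1 o => mul_nonneg (hπ1.1 a1) (hμ0 a1 o i)
    · rw [← hval]; rfl
  · -- upper bound
    rintro y ⟨π1, lam, ahat, v, hcon, hahat, hlamsum, hsum1, hπpos, hlampos, rfl⟩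
    set ν : Fin k → A1 → O → ℝ := fun i a1 o =>
      if π1 a1 = 0 then (if i = i0 then 1 else 0) else lam i a1 o / π1 a1 with hν
    set αb : A1 → O → S → ℝ := fun a1 o s' => ∑ i, ν i a1 o * α i s' with hαbdef
    have hνsum : ∀ a1 o, ∑ i, ν i a1 o = 1 := by
      intro a1 o
      by_cases h : π1 a1 = 0
      · simp [hν, h]
      · simp only [hν, if_neg h]
        rw [← Finset.sum_div, hlamsum, div_self h]
    have hν0 : ∀ i a1 o, 0 ≤ ν i a1 o := by
      intro i a1 o
      by_cases h : π1 a1 = 0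
      · simp only [hν, if_pos h]; split <;> norm_num
      · simp only [hν, if_neg h]
        exact div_nonneg (hlampos i a1 o) (hπpos a1)
    have hmemhull : ∀ a1 o, αb a1 o ∈ K := by
      intro a1 o
      refine mem_convexHull_of_exists_fintype (fun i => ν i a1 o) α
        (fun i => hν0 i a1 o) (hνsum a1 o) (fun i => ⟨i, rfl⟩) ?_
      funext s'
      simp [hαbdef, Finset.sum_apply]
    have hkey : ∀ a1 o s', π1 a1 * αb a1 o s' = ahat a1 o s' := by
      intro a1 o s'
      rw [hahat]
      by_cases h : π1 a1 = 0
      · have hz : ∀ i, lam i a1 o = 0 := fun i =>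
          (Finset.sum_eq_zero_iff_of_nonneg (fun j _ => hlampos j a1 o)).mp
            (by rw [hlamsum a1 o, h]) i (Finset.mem_univ i)
        simp [h, hz]
      · simp only [hαbdef, hν, if_neg h, Finset.mul_sum]
        refine Finset.sum_congr rfl fun i _ => ?_
        field_simp
    have hvle : ∀ s, v s ≤ G.valcompVert π1 αb s := by
      intro s
      unfold valcompVert
      refine Finset.le_inf' _ _ fun a2 _ => ?_
      rw [G.sum_comp_eq π1 αb ahat hkey s a2]
      exact hcon s a2
    calc ∑ s, b s * v s ≤ ∑ s, b s * G.valcompVert π1 αb s :=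
        Finset.sum_le_sum fun s _ => mul_le_mul_of_nonneg_left (hvle s) (hb.1 s)
      _ = f (π1, αb) := rfl
      _ ≤ sSup (f '' D) := le_csSup hbdd ⟨(π1, αb), ⟨⟨hπpos, hsum1⟩, hmemhull⟩, rfl⟩

end OSPOSG
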